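/- Let T be the triple intersection form of M_2^{(dP_8)^2}. Set Γ_B = D_6, Γ_1 = D_7, Γ_2 = D_8, and Γ_0 = 3(3D_5 + D_6 + 3D_7 + 3D_8) = 9D_5 + 3D_6 + 9D_7 + 9D_8. Then T is diagonal in the basis Γ_0, Γ_B, Γ_1, Γ_2: T(Γ_0,Γ_0,Γ_0) = 243, T(Γ_B,Γ_B,Γ_B) = 9, T(Γ_1,Γ_1,Γ_1) = 1, T(Γ_2,Γ_2,Γ_2) = 1, and T(X,Y,Z) = 0 whenever X, Y, Z ∈ {Γ_0, Γ_B, Γ_1, Γ_2} are not all equal. -/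

import Mathlib

namespace Stmt15

/-- The real vector space with basis `D₅, D₆, D₇, D₈` (indexed `0, 1, 2, 3`). -/
abbrev V := Fin 4 → ℝ

/-- The basis vector `D_{i+5}` (`i : Fin 4` zero-based: `D 0 = D₅, …, D 3 = D₈`). -/
def D (i : Fin 4) : V := Pi.single i 1

/-- The triple intersection numbers of `M₂^{(dP₈)²}` on basis triples, symmetric in
the three indices: the only nonzero values, up to permutation, are
`D₅³ = −2, D₆³ = 9, D₇³ = 1, D₈³ = 1, D₅²D₆ = 1, D₅²D₇ = 1, D₅²D₈ = 1, D₅D₆² = −3,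
D₅D₇² = −1, D₅D₈² = −1`. -/
def c (i j k : Fin 4) : ℝ :=
  if ({i, j, k} : Multiset (Fin 4)) = {0, 0, 0} then -2
  else if ({i, j, k} : Multiset (Fin 4)) = {1, 1, 1} then 9
  else if ({i, j, k} : Multiset (Fin 4)) = {2, 2, 2} then 1
  else if ({i, j, k} : Multiset (Fin 4)) = {3, 3, 3} then 1
  else if ({i, j, k} : Multiset (Fin 4)) = {0, 0, 1} then 1
  else if ({i, j, k} : Multiset (Fin 4)) = {0, 0, 2} then 1
  else if ({i, j, k} : Multiset (Fin 4)) = {0, 0, 3} then 1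
  else if ({i, j, k} : Multiset (Fin 4)) = {0, 1, 1} then -3
  else if ({i, j, k} : Multiset (Fin 4)) = {0, 2, 2} then -1
  else if ({i, j, k} : Multiset (Fin 4)) = {0, 3, 3} then -1
  else 0

/-- `Γ_B = D₆`. -/
def ΓB : V := D 1
/-- `Γ₁ = D₇`. -/
def Γ1 : V := D 2
/-- `Γ₂ = D₈`. -/
def Γ2 : V := D 3
/-- `Γ₀ = 3(3D₅ + D₆ + 3D₇ + 3D₈) = 9D₅ + 3D₆ + 9D₇ + 9D₈`. -/
def Γ0 : V := (9 : ℝ) • D 0 + (3 : ℝ) • D 1 + (9 : ℝ) • D 2 + (9 : ℝ) • D 3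

open Finset in
private def e3 : (Fin 4 × Fin 4 × Fin 4) ≃ (Fin 3 → Fin 4) where
  toFun p := ![p.1, p.2.1, p.2.2]
  invFun r := (r 0, r 1, r 2)
  left_inv p := rfl
  right_inv r := by funext i; fin_cases i <;> rfl

open Finset in
private lemma expand (T : MultilinearMap ℝ (fun _ : Fin 3 => V) ℝ)
    (hvals : ∀ i j k : Fin 4, T ![D i, D j, D k] = c i j k) (x y z : V) :
    T ![x, y, z] = ∑ a : Fin 4, ∑ b : Fin 4, ∑ k : Fin 4, x a * y b * z k * c a b k := by
  have key : ∀ v : Fin 3 → V,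
      T v = ∑ r : Fin 3 → Fin 4, (∏ i, v i (r i)) * T (fun i => (Pi.single (r i) 1 : V)) := by
    intro v
    have h : T v = T (fun i => ∑ j : Fin 4, (v i j) • (Pi.single j (1:ℝ) : V)) := by
      congr 1; funext i a
      simp [Finset.sum_apply, Pi.single_apply, mul_comm]
    rw [h, T.map_sum]
    congr 1; funext r
    rw [T.map_smul_univ]
    simp [smul_eq_mul]
  rw [key, ← e3.sum_comp]
  rw [Fintype.sum_prod_type]
  congr 1; funext a
  rw [Fintype.sum_prod_type]
  congr 1; funext b
  congr 1; funext k
  have : (fun i => (Pi.single ((e3 (a,b,k)) i) 1 : V)) = ![D a, D b, D k] := by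
    funext i; fin_cases i <;> rfl
  rw [this, hvals]
  simp [e3, Fin.prod_univ_three, mul_assoc]
  rfl

private def G : Fin 4 → V := ![Γ0, ΓB, Γ1, Γ2]

set_option maxHeartbeats 4000000 in
private lemma tG (T : MultilinearMap ℝ (fun _ : Fin 3 => V) ℝ)
    (hvals : ∀ i j k : Fin 4, T ![D i, D j, D k] = c i j k) (a b k : Fin 4) :
    T ![G a, G b, G k] = if a = b ∧ b = k then ![243, 9, 1, 1] a else 0 := by
  rw [expand T hvals]
  fin_cases a <;> fin_cases b <;> fin_cases k <;>
    · simp +decide [Fin.sum_univ_four, G, Γ0, ΓB, Γ1, Γ2, D, c, Pi.single_apply]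
      try norm_num

/-- The triple intersection form of `M₂^{(dP₈)²}` is diagonal in the basis
`Γ₀, Γ_B, Γ₁, Γ₂`: `T(Γ₀,Γ₀,Γ₀) = 243`, `T(Γ_B,Γ_B,Γ_B) = 9`, `T(Γ₁,Γ₁,Γ₁) = 1`,
`T(Γ₂,Γ₂,Γ₂) = 1`, and `T(X,Y,Z) = 0` whenever `X, Y, Z ∈ {Γ₀, Γ_B, Γ₁, Γ₂}` are not
all equal. -/
theorem statement15 (T : MultilinearMap ℝ (fun _ : Fin 3 => V) ℝ)
    (hsymm : ∀ x y z : V, T ![x, y, z] = T ![y, x, z] ∧ T ![x, y, z] = T ![x, z, y])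
    (hvals : ∀ i j k : Fin 4, T ![D i, D j, D k] = c i j k) :
    T ![Γ0, Γ0, Γ0] = 243 ∧
    T ![ΓB, ΓB, ΓB] = 9 ∧
    T ![Γ1, Γ1, Γ1] = 1 ∧
    T ![Γ2, Γ2, Γ2] = 1 ∧
    (∀ X Y Z : V, X ∈ ({Γ0, ΓB, Γ1, Γ2} : Set V) → Y ∈ ({Γ0, ΓB, Γ1, Γ2} : Set V) →
      Z ∈ ({Γ0, ΓB, Γ1, Γ2} : Set V) → ¬(X = Y ∧ Y = Z) → T ![X, Y, Z] = 0) := by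
  refine ⟨?_, ?_, ?_, ?_, ?_⟩
  · simpa [G] using tG T hvals 0 0 0
  · simpa [G] using tG T hvals 1 1 1
  · simpa [G] using tG T hvals 2 2 2
  · simpa [G] using tG T hvals 3 3 3
  · intro X Y Z hX hY hZ hne
    simp only [Set.mem_insert_iff, Set.mem_singleton_iff] at hX hY hZ
    have hX' : ∃ a : Fin 4, X = G a := by
      rcases hX with rfl | rfl | rfl | rfl
      exacts [⟨0, rfl⟩, ⟨1, rfl⟩, ⟨2, rfl⟩, ⟨3, rfl⟩]
    have hY' : ∃ b : Fin 4, Y = G b := by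
      rcases hY with rfl | rfl | rfl | rfl
      exacts [⟨0, rfl⟩, ⟨1, rfl⟩, ⟨2, rfl⟩, ⟨3, rfl⟩]
    have hZ' : ∃ k : Fin 4, Z = G k := by
      rcases hZ with rfl | rfl | rfl | rfl
      exacts [⟨0, rfl⟩, ⟨1, rfl⟩, ⟨2, rfl⟩, ⟨3, rfl⟩]
    obtain ⟨a, rfl⟩ := hX'
    obtain ⟨b, rfl⟩ := hY'
    obtain ⟨k, rfl⟩ := hZ'
    rw [tG T hvals a b k, if_neg]
    rintro ⟨h1, h2⟩
    exact hne ⟨by rw [h1], by rw [h2]⟩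

end Stmt15
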